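/- arXiv:1609.07555 — 8 statements merged into one kernel-verified Lean document; each statement's English description precedes it below -/
import Mathlib

section
/- For all real numbers α, β, a, b with 1 ≤ α ≤ β and 1 ≤ a ≤ b, one has (1 − a^{−α})·(1 − b^{−β}) ≤ (1 − a^{−β})·(1 − b^{−α}). -/
theorem stmt_0 (α β a b : ℝ) (hα : 1 ≤ α) (hαβ : α ≤ β) (ha : 1 ≤ a) (hab : a ≤ b) :
    (1 - a ^ (-α)) * (1 - b ^ (-β)) ≤ (1 - a ^ (-β)) * (1 - b ^ (-α)) := by
  have ha0 : (0:ℝ) < a := lt_of_lt_of_le one_pos ha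
  have hb0 : (0:ℝ) < b := lt_of_lt_of_le ha0 hab
  have hα0 : (0:ℝ) < α := lt_of_lt_of_le one_pos hα
  set r : ℝ := β / α with hrdef
  have hr : 1 ≤ r := (one_le_div hα0).mpr hαβ
  set S : ℝ := a ^ (-α) with hSdef
  set s : ℝ := b ^ (-α) with hsdef
  have hs0 : 0 < s := Real.rpow_pos_of_pos hb0 _
  have hsS : s ≤ S := by
    rw [hSdef, hsdef, Real.rpow_neg ha0.le, Real.rpow_neg hb0.le]
    exact inv_anti₀ (Real.rpow_pos_of_pos ha0 _)
      (Real.rpow_le_rpow ha0.le hab hα0.le)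
  have hS1 : S ≤ 1 := by
    exact Real.rpow_le_one_of_one_le_of_nonpos ha (by linarith)
  have haβ : a ^ (-β) = S ^ r := by
    rw [hSdef, ← Real.rpow_mul ha0.le]
    congr 1
    rw [hrdef]
    field_simp
  have hbβ : b ^ (-β) = s ^ r := by
    rw [hsdef, ← Real.rpow_mul hb0.le]
    congr 1
    rw [hrdef]
    field_simp
  rw [haβ, hbβ]
  rcases eq_or_lt_of_le hS1 with hS | hS
  · -- S = 1 : both sides vanish
    rw [hS, Real.one_rpow]
    simp
  · -- S < 1 : use convexity of x ^ r
    have hs1 : s < 1 := lt_of_le_of_lt hsS hS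
    have hconv : ConvexOn ℝ (Set.Ici 0) fun x : ℝ => x ^ r := convexOn_rpow hr
    have hsec := hconv.secant_mono (a := 1) (x := s) (y := S)
      (by norm_num) (Set.mem_Ici.mpr hs0.le) (Set.mem_Ici.mpr (hs0.trans_le hsS).le)
      hs1.ne hS.ne hsS
    simp only [Real.one_rpow] at hsec
    have h1s : 0 < 1 - s := by linarith
    have h1S : 0 < 1 - S := by linarith
    have key : (1 - s ^ r) / (1 - s) ≤ (1 - S ^ r) / (1 - S) := by
      have e1 : (s ^ r - 1) / (s - 1) = (1 - s ^ r) / (1 - s) := by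
        rw [← neg_div_neg_eq]; ring_nf
      have e2 : (S ^ r - 1) / (S - 1) = (1 - S ^ r) / (1 - S) := by
        rw [← neg_div_neg_eq]; ring_nf
      rw [← e1, ← e2]; exact hsec
    rw [div_le_div_iff₀ h1s h1S] at key
    nlinarith [key]
end

section
/- For all real numbers α, β with 1 ≤ α ≤ β, the function v(x) = (1 − x^{−α})/(1 − x^{−β}) is monotonically nondecreasing on (1, ∞): for all real x, y with 1 < x ≤ y, v(x) ≤ v(y). -/
theorem stmt_1 (α β : ℝ) (hα : 1 ≤ α) (hαβ : α ≤ β) (x y : ℝ) (hx : 1 < x) (hxy : x ≤ y) :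
    (1 - x ^ (-α)) / (1 - x ^ (-β)) ≤ (1 - y ^ (-α)) / (1 - y ^ (-β)) := by
  have hα0 : 0 < α := lt_of_lt_of_le one_pos hα
  have hx0 : 0 < x := lt_trans one_pos hx
  have hy : 1 < y := lt_of_lt_of_le hx hxy
  have hy0 : 0 < y := lt_trans one_pos hy
  set r : ℝ := β / α with hr
  have hr1 : 1 ≤ r := (one_le_div hα0).2 hαβ
  have hr0 : 0 < r := lt_of_lt_of_le one_pos hr1
  set a := x ^ (-α) with ha
  set b := y ^ (-α) with hb
  have ha1 : a < 1 := Real.rpow_lt_one_of_one_lt_of_neg hx (by linarith)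
  have hb1 : b < 1 := Real.rpow_lt_one_of_one_lt_of_neg hy (by linarith)
  have ha0 : 0 < a := Real.rpow_pos_of_pos hx0 _
  have hb0 : 0 < b := Real.rpow_pos_of_pos hy0 _
  have hba : b ≤ a := Real.rpow_le_rpow_of_nonpos hx0 hxy (by linarith)
  have hxar : x ^ (-β) = a ^ r := by
    rw [ha, ← Real.rpow_mul hx0.le]
    congr 1
    rw [hr]
    field_simp
    try ring
  have hybr : y ^ (-β) = b ^ r := by
    rw [hb, ← Real.rpow_mul hy0.le]
    congr 1
    rw [hr]
    field_simp
    try ring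
  have har1 : a ^ r < 1 := Real.rpow_lt_one ha0.le ha1 hr0
  have hbr1 : b ^ r < 1 := Real.rpow_lt_one hb0.le hb1 hr0
  -- secant monotonicity of convex t ↦ t^r through the point 1
  have hsec : (b ^ r - 1 ^ r) / (b - 1) ≤ (a ^ r - 1 ^ r) / (a - 1) :=
    (convexOn_rpow hr1).secant_mono (Set.mem_Ici.2 zero_le_one)
      (Set.mem_Ici.2 hb0.le) (Set.mem_Ici.2 ha0.le) (ne_of_lt hb1) (ne_of_lt ha1) hba
  rw [Real.one_rpow] at hsec
  have hsec' : (1 - b ^ r) / (1 - b) ≤ (1 - a ^ r) / (1 - a) := by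
    rw [show (1 : ℝ) - b ^ r = -(b ^ r - 1) by ring, show (1 : ℝ) - b = -(b - 1) by ring,
      show (1 : ℝ) - a ^ r = -(a ^ r - 1) by ring, show (1 : ℝ) - a = -(a - 1) by ring,
      neg_div_neg_eq, neg_div_neg_eq]
    exact hsec
  rw [hxar, hybr]
  rw [div_le_div_iff₀ (by linarith) (by linarith)]
  rw [div_le_div_iff₀ (by linarith) (by linarith)] at hsec'
  nlinarith [hsec']
end

section
/- For all real numbers x, α, β with x ≥ 1 and 1 ≤ α ≤ β, one has α·x^β − β·x^α + β − α ≥ 0. -/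
theorem stmt_2 (x α β : ℝ) (hx : 1 ≤ x) (hα : 1 ≤ α) (hαβ : α ≤ β) :
    α * x ^ β - β * x ^ α + β - α ≥ 0 := by
  have hα0 : (0:ℝ) < α := lt_of_lt_of_le one_pos hα
  set y : ℝ := x ^ α with hy
  have hy1 : 1 ≤ y := Real.one_le_rpow hx hα0.le
  have hp : 1 ≤ β / α := (one_le_div hα0).mpr hαβ
  have hb : 1 + (β / α) * (y - 1) ≤ y ^ (β / α) := by
    have := one_add_mul_self_le_rpow_one_add (s := y - 1) (by linarith) hp
    simpa using this
  have hxb : x ^ β = y ^ (β / α) := by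
    rw [hy, ← Real.rpow_mul (by linarith : (0:ℝ) ≤ x)]
    congr 1
    field_simp
  rw [hxb]
  have := mul_le_mul_of_nonneg_left hb hα0.le
  have hβ : α * (β / α) = β := by field_simp
  nlinarith [this]
end

section
/- For all real numbers α, β, a, b with 1 ≤ α ≤ β and 1 ≤ a ≤ b, one has (a − a^{−α})·(b − b^{−β}) ≤ (a − a^{−β})·(b − b^{−α}). -/
open Real Set

/-- Bernoulli-based sublemma: `c * (a^d - 1) ≤ d * a^(d-c) * (a^c - 1)`. -/
lemma stmt3_sub1 (a c d : ℝ) (ha : 1 ≤ a) (hc : 0 ≤ c) (hcd : c ≤ d) :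
    c * (a ^ d - 1) ≤ d * a ^ (d - c) * (a ^ c - 1) := by
  have ha0 : (0:ℝ) < a := lt_of_lt_of_le one_pos ha
  rcases eq_or_lt_of_le hc with h | h
  · rw [← h]; simp
  · have hd0 : 0 < d := lt_of_lt_of_le h hcd
    have hx : a ^ (-c) ≤ 1 := Real.rpow_le_one_of_one_le_of_nonpos ha (by linarith)
    have hx0 : 0 < a ^ (-c) := Real.rpow_pos_of_pos ha0 _
    have hp : 1 ≤ d / c := (one_le_div h).2 hcd
    have hbern : 1 + (d/c) * (a^(-c) - 1) ≤ (1 + (a^(-c) - 1)) ^ (d/c) :=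
      one_add_mul_self_le_rpow_one_add (by linarith) hp
    have hxp : (1 + (a^(-c) - 1)) ^ (d/c) = a ^ (-d) := by
      rw [show 1 + (a^(-c)-1) = a^(-c) by ring, ← Real.rpow_mul ha0.le]
      congr 1
      field_simp
    rw [hxp] at hbern
    have hc' : c ≠ 0 := ne_of_gt h
    have hbern' : c + d * (a^(-c) - 1) ≤ c * a^(-d) := by
      have h2 := mul_le_mul_of_nonneg_left hbern (le_of_lt h)
      calc c + d * (a^(-c) - 1) = c * (1 + (d/c) * (a^(-c) - 1)) := by field_simp
        _ ≤ c * a^(-d) := h2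
    have had : (0:ℝ) < a ^ d := Real.rpow_pos_of_pos ha0 _
    have h3 := mul_le_mul_of_nonneg_right hbern' had.le
    have A1 : a^(-c) * a^d = a^(d-c) := by rw [← Real.rpow_add ha0]; ring_nf
    have A2 : a^(-d) * a^d = 1 := by rw [← Real.rpow_add ha0]; simp
    have A3 : a^(d-c) * a^c = a^d := by rw [← Real.rpow_add ha0]; ring_nf
    nlinarith [h3, A1, A2, A3]

/-- Key inequality: for `1 ≤ a ≤ b` and `0 ≤ c ≤ d`,
`(a^d - 1)(b^c - 1) ≤ (a^c - 1)(b^d - 1)`. -/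
lemma stmt3_key (a b c d : ℝ) (ha : 1 ≤ a) (hab : a ≤ b) (hc : 0 ≤ c) (hcd : c ≤ d) :
    (a ^ d - 1) * (b ^ c - 1) ≤ (a ^ c - 1) * (b ^ d - 1) := by
  have ha0 : (0:ℝ) < a := lt_of_lt_of_le one_pos ha
  set f : ℝ → ℝ := fun x => (a^c - 1) * (x^d - 1) - (a^d - 1) * (x^c - 1) with hf
  have hder : ∀ x : ℝ, a ≤ x →
      HasDerivAt f ((a^c - 1) * (d * x^(d-1)) - (a^d - 1) * (c * x^(c-1))) x := by
    intro x hx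
    have hx0 : x ≠ 0 := ne_of_gt (by linarith)
    have h1 := Real.hasDerivAt_rpow_const (x := x) (p := d) (Or.inl hx0)
    have h2 := Real.hasDerivAt_rpow_const (x := x) (p := c) (Or.inl hx0)
    exact ((h1.sub_const 1).const_mul _).sub ((h2.sub_const 1).const_mul _)
  have hmono : MonotoneOn f (Set.Ici a) := by
    apply monotoneOn_of_deriv_nonneg (convex_Ici a)
    · intro x hx
      exact (hder x hx).continuousAt.continuousWithinAt
    · intro x hx
      rw [interior_Ici] at hx
      exact ((hder x (le_of_lt hx)).differentiableAt).differentiableWithinAt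
    · intro x hx
      rw [interior_Ici] at hx
      rw [(hder x (le_of_lt hx)).deriv]
      have hax : a ≤ x := le_of_lt hx
      have hx0 : (0:ℝ) < x := lt_of_lt_of_le ha0 hax
      have hpow : x^(d-1) = x^(d-c) * x^(c-1) := by
        rw [← Real.rpow_add hx0]; ring_nf
      have hxa : a^(d-c) ≤ x^(d-c) := Real.rpow_le_rpow ha0.le hax (by linarith)
      have hac : 1 ≤ a^c := by
        calc (1:ℝ) = a ^ (0:ℝ) := (Real.rpow_zero a).symm
          _ ≤ a ^ c := Real.rpow_le_rpow_of_exponent_le ha hc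
      have hxc1 : (0:ℝ) < x^(c-1) := Real.rpow_pos_of_pos hx0 _
      have hd0 : (0:ℝ) ≤ d := le_trans hc hcd
      have S := stmt3_sub1 a c d ha hc hcd
      have e2 : ((a^c-1)*d)*a^(d-c) ≤ ((a^c-1)*d)*x^(d-c) :=
        mul_le_mul_of_nonneg_left hxa (by nlinarith)
      have e3 : c*(a^d-1) ≤ ((a^c-1)*d)*x^(d-c) := by nlinarith
      have e4 := mul_le_mul_of_nonneg_right e3 hxc1.le
      calc (0:ℝ) = (a^d-1)*(c*x^(c-1)) - (c*(a^d-1))*x^(c-1) := by ring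
        _ ≤ (a^c-1)*(d*x^(d-1)) - (a^d-1)*(c*x^(c-1)) := by
            rw [hpow]; nlinarith [e4]
        _ ≤ _ := by linarith [e4]
  have h0 : f a = 0 := by simp only [hf]; ring
  have h1 : f a ≤ f b := hmono Set.self_mem_Ici hab hab
  simp only [hf] at h1
  linarith

theorem stmt_3 (α β a b : ℝ) (hα : 1 ≤ α) (hαβ : α ≤ β) (ha : 1 ≤ a) (hab : a ≤ b) :
    (a - a ^ (-α)) * (b - b ^ (-β)) ≤ (a - a ^ (-β)) * (b - b ^ (-α)) := by
  have ha0 : (0:ℝ) < a := lt_of_lt_of_le one_pos ha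
  have hb1 : (1:ℝ) ≤ b := le_trans ha hab
  have hb0 : (0:ℝ) < b := lt_of_lt_of_le one_pos hb1
  set c := β - α with hc
  set d := 1 + β with hd
  have hc0 : 0 ≤ c := by rw [hc]; linarith
  have hcd : c ≤ d := by rw [hc, hd]; linarith
  have key := stmt3_key a b c d ha hab hc0 hcd
  have e1 : a - a^(-α) = a^(-β) * (a^d - a^c) := by
    rw [mul_sub, ← Real.rpow_add ha0, ← Real.rpow_add ha0,
      show -β + d = 1 by rw [hd]; ring, show -β + c = -α by rw [hc]; ring, Real.rpow_one]
  have e2 : b - b^(-β) = b^(-β) * (b^d - 1) := by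
    rw [mul_sub, ← Real.rpow_add hb0, show -β + d = 1 by rw [hd]; ring, Real.rpow_one, mul_one]
  have e3 : a - a^(-β) = a^(-β) * (a^d - 1) := by
    rw [mul_sub, ← Real.rpow_add ha0, show -β + d = 1 by rw [hd]; ring, Real.rpow_one, mul_one]
  have e4 : b - b^(-α) = b^(-β) * (b^d - b^c) := by
    rw [mul_sub, ← Real.rpow_add hb0, ← Real.rpow_add hb0,
      show -β + d = 1 by rw [hd]; ring, show -β + c = -α by rw [hc]; ring, Real.rpow_one]
  rw [e1, e2, e3, e4]
  have hXY : (a^d - a^c)*(b^d - 1) ≤ (a^d - 1)*(b^d - b^c) := by nlinarith [key]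
  have hPQ : (0:ℝ) < a^(-β) * b^(-β) := by positivity
  calc a^(-β) * (a^d - a^c) * (b^(-β) * (b^d - 1))
      = (a^(-β) * b^(-β)) * ((a^d - a^c) * (b^d - 1)) := by ring
    _ ≤ (a^(-β) * b^(-β)) * ((a^d - 1) * (b^d - b^c)) :=
        mul_le_mul_of_nonneg_left hXY hPQ.le
    _ = a^(-β) * (a^d - 1) * (b^(-β) * (b^d - b^c)) := by ring
end

section
/- Let m ≥ 1, let q_1, ..., q_m be real numbers with 1 < q_1 ≤ q_2 ≤ ... ≤ q_m, let α_1, ..., α_m be real numbers with α_i ≥ 1 for all i, and let β_1, ..., β_m be a permutation of α_1, ..., α_m (i.e., β_i = α_{π(i)} for some permutation π of {1,...,m}) satisfying β_1 ≥ β_2 ≥ ... ≥ β_m. Then ∏_{i=1}^m (q_i − q_i^{−α_i}) ≤ ∏_{i=1}^m (q_i − q_i^{−β_i}). -/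
open Finset

/-- Bernoulli-derived tangent-line inequality for `y ^ k`. -/
private lemma tangent_ineq {y k : ℝ} (hy0 : 0 < y) (hy1 : y < 1) (hk : 1 ≤ k) :
    y ^ k + k * y ^ (k - 1) * (1 - y) ≤ 1 := by
  have hs : (0:ℝ) ≤ (1 - y) / y := div_nonneg (by linarith) hy0.le
  have hb := one_add_mul_self_le_rpow_one_add (by linarith : (-1:ℝ) ≤ (1 - y) / y) hk
  have h1 : 1 + (1 - y) / y = 1 / y := by field_simp; ring
  rw [h1] at hb
  have hyk : 0 < y ^ k := Real.rpow_pos_of_pos hy0 k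
  have h2 : y ^ k * (1 / y) ^ k = 1 := by
    rw [one_div, Real.inv_rpow hy0.le, mul_inv_cancel₀ (Real.rpow_pos_of_pos hy0 k).ne']
  have h3 : y ^ k * (1 + k * ((1 - y) / y)) = y ^ k + k * y ^ (k - 1) * (1 - y) := by
    have hsub : y ^ (k - 1) = y ^ k / y := by
      rw [Real.rpow_sub hy0, Real.rpow_one]
    rw [hsub]
    field_simp
  calc y ^ k + k * y ^ (k - 1) * (1 - y) = y ^ k * (1 + k * ((1 - y) / y)) := h3.symm
    _ ≤ y ^ k * (1 / y) ^ k := by exact mul_le_mul_of_nonneg_left hb hyk.le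
    _ = 1 := h2

/-- Key ratio inequality: `k * y^k * (1 - y) ≤ y * (1 - y^k)`. -/
private lemma ratio_ineq {y k : ℝ} (hy0 : 0 < y) (hy1 : y < 1) (hk : 1 ≤ k) :
    k * y ^ k * (1 - y) ≤ y * (1 - y ^ k) := by
  have ht := tangent_ineq hy0 hy1 hk
  have hmul := mul_le_mul_of_nonneg_left (by linarith : k * y ^ (k - 1) * (1 - y) ≤ 1 - y ^ k) hy0.le
  have hsub : y * y ^ (k - 1) = y ^ k := by
    rw [Real.rpow_sub hy0, Real.rpow_one]
    field_simp
  calc k * y ^ k * (1 - y) = y * (k * y ^ (k - 1) * (1 - y)) := by rw [← hsub]; ring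
    _ ≤ y * (1 - y ^ k) := hmul

/-- The core inequality: for `z ∈ (0,1)` and `r, k ≥ 1`,
`(1 - z) * (1 - z^(r*k)) ≤ (1 - z^r) * (1 - z^k)`. -/
private lemma core_ineq {z r k : ℝ} (hz0 : 0 < z) (hz1 : z < 1) (hr : 1 ≤ r) (hk : 1 ≤ k) :
    (1 - z) * (1 - z ^ (r * k)) ≤ (1 - z ^ r) * (1 - z ^ k) := by
  -- define F t = log (1 - z^t) - log (1 - z^(t*k)), monotone on [1, ∞)
  set F : ℝ → ℝ := fun t => Real.log (1 - z ^ t) - Real.log (1 - z ^ (t * k)) with hF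
  have hzt_lt : ∀ t : ℝ, 0 < t → z ^ t < 1 := fun t ht => Real.rpow_lt_one hz0.le hz1 ht
  have hzt_pos : ∀ t : ℝ, 0 < z ^ t := fun t => Real.rpow_pos_of_pos hz0 t
  have hk0 : 0 < k := lt_of_lt_of_le one_pos hk
  have hderiv : ∀ t : ℝ, 0 < t → HasDerivAt F
      (-(z ^ t * Real.log z) / (1 - z ^ t) + z ^ (t * k) * Real.log z * k / (1 - z ^ (t * k))) t := by
    intro t ht
    have h1 : HasDerivAt (fun t : ℝ => z ^ t) (z ^ t * Real.log z) t :=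
      (Real.hasStrictDerivAt_const_rpow hz0 t).hasDerivAt
    have h2 : HasDerivAt (fun t : ℝ => (1:ℝ) - z ^ t) (-(z ^ t * Real.log z)) t := by
      exact h1.const_sub 1
    have h3 : HasDerivAt (fun t : ℝ => Real.log (1 - z ^ t))
        (-(z ^ t * Real.log z) / (1 - z ^ t)) t :=
      h2.log (by have := hzt_lt t ht; linarith)
    have h4 : HasDerivAt (fun t : ℝ => t * k) k t := hasDerivAt_mul_const k
    have h5 : HasDerivAt (fun t : ℝ => z ^ (t * k)) (z ^ (t * k) * Real.log z * k) t := by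
      have := ((Real.hasStrictDerivAt_const_rpow hz0 (t * k)).hasDerivAt).comp t h4
      exact this
    have h6 : HasDerivAt (fun t : ℝ => (1:ℝ) - z ^ (t * k)) (-(z ^ (t * k) * Real.log z * k)) t := by
      exact h5.const_sub 1
    have h7 : HasDerivAt (fun t : ℝ => Real.log (1 - z ^ (t * k)))
        (-(z ^ (t * k) * Real.log z * k) / (1 - z ^ (t * k))) t :=
      h6.log (by have := hzt_lt (t * k) (mul_pos ht hk0); linarith)
    have := h3.sub h7
    exact this.congr_deriv (by ring)
  have hderiv_nonneg : ∀ t : ℝ, 1 ≤ t →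
      0 ≤ -(z ^ t * Real.log z) / (1 - z ^ t) + z ^ (t * k) * Real.log z * k / (1 - z ^ (t * k)) := by
    intro t ht
    have ht0 : 0 < t := lt_of_lt_of_le one_pos ht
    have hy1 : z ^ t < 1 := hzt_lt t ht0
    have hy0 : 0 < z ^ t := hzt_pos t
    have hw1 : z ^ (t * k) < 1 := hzt_lt (t * k) (mul_pos ht0 hk0)
    have hw0 : 0 < z ^ (t * k) := hzt_pos (t * k)
    have hL : 0 < -Real.log z := by
      have := Real.log_neg hz0 hz1
      linarith
    -- key: k * z^(t*k) * (1 - z^t) ≤ z^t * (1 - z^(t*k))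
    have hkey : k * z ^ (t * k) * (1 - z ^ t) ≤ z ^ t * (1 - z ^ (t * k)) := by
      have hzw : z ^ (t * k) = (z ^ t) ^ k := Real.rpow_mul hz0.le t k ▸ rfl
      rw [hzw]
      exact ratio_ineq hy0 hy1 hk
    rw [div_add_div _ _ (by linarith : (1:ℝ) - z ^ t ≠ 0) (by linarith : (1:ℝ) - z ^ (t * k) ≠ 0)]
    apply div_nonneg _ (by nlinarith)
    nlinarith [mul_le_mul_of_nonneg_left hkey hL.le]
  have hmono : MonotoneOn F (Set.Ici 1) := by
    apply monotoneOn_of_hasDerivWithinAt_nonneg (convex_Ici 1)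
      (fun t ht => ((hderiv t (lt_of_lt_of_le one_pos ht)).continuousAt).continuousWithinAt)
      (f' := fun t => -(z ^ t * Real.log z) / (1 - z ^ t)
        + z ^ (t * k) * Real.log z * k / (1 - z ^ (t * k)))
    · intro t ht
      rw [interior_Ici] at ht
      exact (hderiv t (lt_trans one_pos ht)).hasDerivWithinAt
    · intro t ht
      rw [interior_Ici] at ht
      exact hderiv_nonneg t ht.le
  have hFF := hmono (Set.mem_Ici.2 le_rfl) (Set.mem_Ici.2 hr) hr
  simp only [hF, Real.rpow_one, one_mul] at hFF
  -- hFF : log (1 - z) - log (1 - z^k) ≤ log (1 - z^r) - log (1 - z^(r*k))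
  have p1 : 0 < 1 - z := by linarith
  have p2 : 0 < 1 - z ^ k := by have := hzt_lt k hk0; linarith
  have p3 : 0 < 1 - z ^ r := by have := hzt_lt r (lt_of_lt_of_le one_pos hr); linarith
  have p4 : 0 < 1 - z ^ (r * k) := by
    have := hzt_lt (r * k) (mul_pos (lt_of_lt_of_le one_pos hr) hk0); linarith
  have hlog : Real.log ((1 - z) * (1 - z ^ (r * k))) ≤ Real.log ((1 - z ^ r) * (1 - z ^ k)) := by
    rw [Real.log_mul p1.ne' p4.ne', Real.log_mul p3.ne' p2.ne']
    linarith
  exact (Real.log_le_log_iff (mul_pos p1 p4) (mul_pos p3 p2)).1 hlog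

/-- Positivity of the factors. -/
private lemma factor_pos {p t : ℝ} (hp : 1 < p) (ht : 1 ≤ t) : 0 < p - p ^ (-t) := by
  have : p ^ (-t) < 1 := Real.rpow_lt_one_of_one_lt_of_neg hp (by linarith)
  linarith

/-- The swap inequality. -/
private lemma swap_ineq {p r s t : ℝ} (hp : 1 < p) (hpr : p ≤ r) (hs : 1 ≤ s) (hst : s ≤ t) :
    (p - p ^ (-s)) * (r - r ^ (-t)) ≤ (p - p ^ (-t)) * (r - r ^ (-s)) := by
  have hp0 : 0 < p := lt_trans one_pos hp
  have hr1 : 1 < r := lt_of_lt_of_le hp hpr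
  have hr0 : 0 < r := lt_trans one_pos hr1
  have hlp : 0 < Real.log p := Real.log_pos hp
  have hlr : Real.log p ≤ Real.log r := Real.log_le_log hp0 hpr
  set c : ℝ := 1 + s with hc
  set d : ℝ := 1 + t with hd
  have hc0 : 0 < c := by rw [hc]; linarith
  have hcd : c ≤ d := by rw [hc, hd]; linarith
  set k : ℝ := Real.log r / Real.log p with hkdef
  have hk : 1 ≤ k := (one_le_div hlp).2 hlr
  set rr : ℝ := d / c with hrr
  have hr' : 1 ≤ rr := (one_le_div hc0).2 hcd
  set z : ℝ := p ^ (-c) with hz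
  have hz0 : 0 < z := Real.rpow_pos_of_pos hp0 _
  have hz1 : z < 1 := Real.rpow_lt_one_of_one_lt_of_neg hp (by linarith)
  have hcore := core_ineq hz0 hz1 hr' hk
  have e1 : z ^ rr = p ^ (-d) := by
    rw [hz, ← Real.rpow_mul hp0.le]
    congr 1
    field_simp [hrr]
    rw [hrr]; field_simp [hc0.ne']
  have e2 : z ^ k = r ^ (-c) := by
    rw [hz, ← Real.rpow_mul hp0.le, Real.rpow_def_of_pos hp0, Real.rpow_def_of_pos hr0]
    congr 1
    field_simp [hkdef]
    rw [hkdef]; field_simp [hlp.ne']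
  have e3 : z ^ (rr * k) = r ^ (-d) := by
    rw [hz, ← Real.rpow_mul hp0.le, Real.rpow_def_of_pos hp0, Real.rpow_def_of_pos hr0]
    congr 1
    field_simp [hkdef, hrr]
    rw [hkdef, hrr]; field_simp [hlp.ne', hc0.ne']
  rw [e1, e2, e3] at hcore
  -- hcore : (1 - p^(-c)) * (1 - r^(-d)) ≤ (1 - p^(-d)) * (1 - r^(-c))
  have f1 : p - p ^ (-s) = p * (1 - p ^ (-c)) := by
    have : p * p ^ (-c) = p ^ (-s) := by
      nth_rewrite 1 [← Real.rpow_one p]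
      rw [← Real.rpow_add hp0, hc]
      ring_nf
    rw [mul_sub, mul_one, this]
  have f2 : p - p ^ (-t) = p * (1 - p ^ (-d)) := by
    have : p * p ^ (-d) = p ^ (-t) := by
      nth_rewrite 1 [← Real.rpow_one p]
      rw [← Real.rpow_add hp0, hd]
      ring_nf
    rw [mul_sub, mul_one, this]
  have f3 : r - r ^ (-s) = r * (1 - r ^ (-c)) := by
    have : r * r ^ (-c) = r ^ (-s) := by
      nth_rewrite 1 [← Real.rpow_one r]
      rw [← Real.rpow_add hr0, hc]
      ring_nf
    rw [mul_sub, mul_one, this]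
  have f4 : r - r ^ (-t) = r * (1 - r ^ (-d)) := by
    have : r * r ^ (-d) = r ^ (-t) := by
      nth_rewrite 1 [← Real.rpow_one r]
      rw [← Real.rpow_add hr0, hd]
      ring_nf
    rw [mul_sub, mul_one, this]
  rw [f1, f2, f3, f4]
  calc p * (1 - p ^ (-c)) * (r * (1 - r ^ (-d)))
      = (p * r) * ((1 - p ^ (-c)) * (1 - r ^ (-d))) := by ring
    _ ≤ (p * r) * ((1 - p ^ (-d)) * (1 - r ^ (-c))) :=
        mul_le_mul_of_nonneg_left hcore (by positivity)
    _ = p * (1 - p ^ (-d)) * (r * (1 - r ^ (-c))) := by ring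

/-- Exchanging the values of a positive function at two indices, if the exchanged
pair-product is larger, the total product is larger. -/
private lemma prod_swap_le {n : ℕ} (g g' : Fin n → ℝ) (a b : Fin n) (hab : a ≠ b)
    (hpos : ∀ i, 0 < g i)
    (heq : ∀ i, i ≠ a → i ≠ b → g' i = g i) (hkey : g a * g b ≤ g' a * g' b) :
    ∏ i, g i ≤ ∏ i, g' i := by
  have hb : b ∈ (univ : Finset (Fin n)).erase a := Finset.mem_erase.2 ⟨hab.symm, mem_univ b⟩
  have hrest : ∏ i ∈ ((univ : Finset (Fin n)).erase a).erase b, g i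
      = ∏ i ∈ ((univ : Finset (Fin n)).erase a).erase b, g' i := by
    refine Finset.prod_congr rfl fun i hi => ?_
    have hi' := Finset.mem_erase.1 hi
    exact (heq i (Finset.mem_erase.1 hi'.2).1 hi'.1).symm
  have hdecomp : ∀ h : Fin n → ℝ, ∏ i, h i
      = h a * (h b * ∏ i ∈ ((univ : Finset (Fin n)).erase a).erase b, h i) := by
    intro h
    rw [Finset.mul_prod_erase _ _ hb, Finset.mul_prod_erase _ _ (mem_univ a)]
  rw [hdecomp g, hdecomp g', hrest, ← mul_assoc, ← mul_assoc]
  apply mul_le_mul_of_nonneg_right hkey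
  rw [← hrest]
  exact Finset.prod_nonneg fun i _ => (hpos i).le

private lemma map_univ_succ {n : ℕ} (γ : Fin (n + 1) → ℝ) :
    Multiset.map γ (univ : Finset (Fin (n + 1))).val
      = γ 0 ::ₘ Multiset.map (γ ∘ Fin.succ) (univ : Finset (Fin n)).val := by
  rw [Fin.univ_succ, Finset.cons_val, Multiset.map_cons, Finset.map_val, Multiset.map_map]
  rfl

private lemma main_ind : ∀ (n : ℕ) (q α β : Fin n → ℝ), Monotone q → (∀ i, 1 < q i) →
    (∀ i, 1 ≤ α i) → (∀ i, 1 ≤ β i) → Antitone β →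
    Multiset.map α (univ : Finset (Fin n)).val = Multiset.map β (univ : Finset (Fin n)).val →
    ∏ i, (q i - q i ^ (-α i)) ≤ ∏ i, (q i - q i ^ (-β i)) := by
  intro n
  induction n with
  | zero => intro q α β _ _ _ _ _ _; simp
  | succ n ih =>
    intro q α β hqmono hq1 hα hβ hβanti hmul
    -- β 0 is the max of the α values
    have hmax : ∀ i, α i ≤ β 0 := by
      intro i
      have hmem : α i ∈ Multiset.map β (univ : Finset (Fin (n+1))).val := by
        rw [← hmul]
        exact Multiset.mem_map.2 ⟨i, by simp, rfl⟩
      obtain ⟨k, _, hk⟩ := Multiset.mem_map.1 hmem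
      rw [← hk]
      exact hβanti (Fin.zero_le k)
    obtain ⟨j, _, hj⟩ : ∃ j ∈ (univ : Finset (Fin (n+1))).val, α j = β 0 := by
      have hmem : β 0 ∈ Multiset.map α (univ : Finset (Fin (n+1))).val := by
        rw [hmul]
        exact Multiset.mem_map.2 ⟨0, by simp, rfl⟩
      exact Multiset.mem_map.1 hmem
    set σ : Equiv.Perm (Fin (n + 1)) := Equiv.swap 0 j with hσ
    set α' : Fin (n + 1) → ℝ := α ∘ σ with hα'
    have hα'0 : α' 0 = β 0 := by
      rw [hα', hσ]
      simp [Equiv.swap_apply_left, hj]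
    have hα'ge : ∀ i, 1 ≤ α' i := fun i => hα (σ i)
    -- step 1 : product with α ≤ product with α'
    have step1 : ∏ i, (q i - q i ^ (-α i)) ≤ ∏ i, (q i - q i ^ (-α' i)) := by
      rcases eq_or_ne j 0 with rfl | hj0
      · apply le_of_eq
        refine Finset.prod_congr rfl fun i _ => ?_
        rw [hα', hσ, Equiv.swap_self]
        simp
      · apply prod_swap_le _ _ 0 j (Ne.symm hj0)
          (fun i => factor_pos (hq1 i) (hα i))
        · intro i hi0 hij
          rw [hα', hσ]
          simp [Equiv.swap_apply_of_ne_of_ne hi0 hij]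
        · have h0j : α' 0 = α j := by rw [hα', hσ]; simp [Equiv.swap_apply_left]
          have hj0' : α' j = α 0 := by rw [hα', hσ]; simp [Equiv.swap_apply_right]
          rw [h0j, hj0']
          exact swap_ineq (hq1 0) (hqmono (Fin.zero_le j)) (hα 0) (hj ▸ hmax 0)
    -- multiset of α' equals multiset of α (hence of β)
    have hmul' : Multiset.map α' (univ : Finset (Fin (n+1))).val
        = Multiset.map β (univ : Finset (Fin (n+1))).val := by
      rw [hα']
      have : Multiset.map (α ∘ σ) (univ : Finset (Fin (n+1))).val
          = Multiset.map α (Multiset.map σ (univ : Finset (Fin (n+1))).val) := by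
        rw [Multiset.map_map]
      rw [this]
      have huniv : Multiset.map σ (univ : Finset (Fin (n+1))).val
          = (univ : Finset (Fin (n+1))).val := by
        have := Finset.map_univ_equiv σ
        calc Multiset.map σ (univ : Finset (Fin (n+1))).val
            = (Finset.map σ.toEmbedding univ).val := by rw [Finset.map_val]; rfl
          _ = (univ : Finset (Fin (n+1))).val := by rw [this]
      rw [huniv, hmul]
    -- cancel heads to get the tail multiset equality
    have htail : Multiset.map (α' ∘ Fin.succ) (univ : Finset (Fin n)).val
        = Multiset.map (β ∘ Fin.succ) (univ : Finset (Fin n)).val := by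
      have h1 := hmul'
      rw [map_univ_succ α', map_univ_succ β, hα'0] at h1
      exact (Multiset.cons_inj_right _).1 h1
    have htailprod := ih (q ∘ Fin.succ) (α' ∘ Fin.succ) (β ∘ Fin.succ)
      (hqmono.comp Fin.strictMono_succ.monotone)
      (fun i => hq1 _) (fun i => hα'ge _) (fun i => hβ _)
      (hβanti.comp_monotone Fin.strictMono_succ.monotone) htail
    refine le_trans step1 ?_
    rw [Fin.prod_univ_succ, Fin.prod_univ_succ, hα'0]
    exact mul_le_mul_of_nonneg_left htailprod (factor_pos (hq1 0) (hβ 0)).le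

theorem stmt_4 (m : ℕ) (hm : 1 ≤ m) (q α β : Fin m → ℝ)
    (hq1 : ∀ i, 1 < q i) (hqmono : Monotone q)
    (hα : ∀ i, 1 ≤ α i)
    (π : Equiv.Perm (Fin m)) (hβ : ∀ i, β i = α (π i))
    (hβmono : Antitone β) :
    ∏ i, (q i - q i ^ (-α i)) ≤ ∏ i, (q i - q i ^ (-β i)) := by
  apply main_ind m q α β hqmono hq1 hα (fun i => (hβ i) ▸ hα (π i)) hβmono
  have hβfun : β = α ∘ π := funext hβ
  rw [hβfun]
  have : Multiset.map (α ∘ π) (univ : Finset (Fin m)).val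
      = Multiset.map α (Multiset.map π (univ : Finset (Fin m)).val) := by
    rw [Multiset.map_map]
  rw [this]
  congr 1
  exact (calc Multiset.map π (univ : Finset (Fin m)).val
      = (Finset.map π.toEmbedding univ).val := by rw [Finset.map_val]; rfl
    _ = (univ : Finset (Fin m)).val := by rw [Finset.map_univ_equiv π]).symm
end

section
/- Let m ≥ 1, let q_1 < q_2 < ... < q_m be prime numbers, let α_1, ..., α_m be positive integers, and let β_1, ..., β_m be a permutation of α_1, ..., α_m satisfying β_1 ≥ β_2 ≥ ... ≥ β_m. Then e^γ · log log(∏_{k=1}^m q_k^{α_k}) − ∏_{k=1}^m (q_k − q_k^{−α_k})/(q_k − 1) ≥ e^γ · log log(∏_{k=1}^m p_k^{β_k}) − ∏_{k=1}^m (p_k − p_k^{−β_k})/(p_k − 1). -/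
open Finset

/-- termwise swap inequality for powers -/
lemma pow_pow_swap {x y : ℝ} (hy : 0 ≤ y) (hxy : y ≤ x) {a b : ℕ} (hab : a ≤ b) :
    y ^ b * x ^ a ≤ x ^ b * y ^ a := by
  obtain ⟨d, rfl⟩ := Nat.exists_eq_add_of_le hab
  have hx : 0 ≤ x := hy.trans hxy
  have h1 : y ^ d ≤ x ^ d := pow_le_pow_left₀ hy hxy d
  have h2 : (0:ℝ) ≤ x ^ a * y ^ a := by positivity
  calc y ^ (a + d) * x ^ a = (x ^ a * y ^ a) * y ^ d := by ring
    _ ≤ (x ^ a * y ^ a) * x ^ d := by exact mul_le_mul_of_nonneg_left h1 h2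
    _ = x ^ (a + d) * y ^ a := by ring

noncomputable def Hs (r : ℝ) (a : ℕ) : ℝ := ∑ i ∈ Finset.range (a + 1), (r⁻¹) ^ i

lemma Hs_nonneg {r : ℝ} (hr : 0 ≤ r) (a : ℕ) : 0 ≤ Hs r a := by
  apply Finset.sum_nonneg; intro i _; positivity

lemma Hs_anti {p r : ℝ} (hp : 0 < p) (hpr : p ≤ r) (a : ℕ) : Hs r a ≤ Hs p a := by
  apply Finset.sum_le_sum; intro i _
  exact pow_le_pow_left₀ (inv_nonneg.mpr (hp.trans_le hpr).le) (inv_anti₀ hp hpr) i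

lemma Hs_swap {p r : ℝ} (hp : 0 < p) (hpr : p ≤ r) {a b : ℕ} (hab : a ≤ b) :
    Hs p a * Hs r b ≤ Hs p b * Hs r a := by
  have hr : 0 < r := hp.trans_le hpr
  have hsplit : ∀ s : ℝ, Hs s b = Hs s a + ∑ i ∈ Finset.Ico (a+1) (b+1), (s⁻¹) ^ i := by
    intro s
    rw [Hs, Hs, ← Finset.sum_range_add_sum_Ico _ (by omega : a + 1 ≤ b + 1)]
  rw [hsplit p, hsplit r, mul_add, add_mul]
  apply add_le_add le_rfl
  rw [Finset.mul_sum, Finset.sum_mul]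
  apply Finset.sum_le_sum
  intro j hj
  simp only [Finset.mem_Ico] at hj
  rw [Hs, Finset.sum_mul, Hs, Finset.mul_sum]
  apply Finset.sum_le_sum
  intro i hi
  simp only [Finset.mem_range] at hi
  have hij : i ≤ j := by omega
  have := pow_pow_swap (y := r⁻¹) (x := p⁻¹) (inv_nonneg.mpr hr.le)
    (inv_anti₀ hp hpr) hij
  calc (p⁻¹) ^ i * (r⁻¹) ^ j = (r⁻¹) ^ j * (p⁻¹) ^ i := by ring
    _ ≤ (p⁻¹) ^ j * (r⁻¹) ^ i := this

lemma Hs_mono {r : ℝ} (hr : 0 ≤ r) {a b : ℕ} (hab : a ≤ b) : Hs r a ≤ Hs r b := by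
  apply Finset.sum_le_sum_of_subset_of_nonneg
  · exact Finset.range_subset_range.mpr (by omega)
  · intro i _ _; positivity

lemma factor_eq {r : ℝ} (hr : 2 ≤ r) (a : ℕ) :
    (r - r ^ (-(a : ℝ))) / (r - 1) = Hs r a := by
  have hr0 : (0:ℝ) < r := by linarith
  have hr1 : r ≠ 1 := by intro h; rw [h] at hr; linarith
  have hinv1 : r⁻¹ ≠ 1 := by
    intro h; apply hr1; field_simp at h; linarith
  have h3 : r ≠ 0 := ne_of_gt hr0
  have h4 : (r:ℝ)^a ≠ 0 := pow_ne_zero _ h3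
  have h1 : r - 1 ≠ 0 := by intro h; apply hr1; linarith
  have h2 : r⁻¹ - 1 ≠ 0 := sub_ne_zero.mpr hinv1
  rw [Hs, geom_sum_eq hinv1, Real.rpow_neg hr0.le, Real.rpow_natCast]
  rw [div_eq_div_iff h1 h2]
  have hx : (r⁻¹) ^ (a + 1) = (r ^ a)⁻¹ * r⁻¹ := by rw [pow_succ, inv_pow]
  rw [hx]
  have hBr : r⁻¹ * r = 1 := inv_mul_cancel₀ h3
  linear_combination ((1:ℝ) - (r ^ a)⁻¹) * hBr

lemma rearr {m : ℕ} (g : Fin m → ℕ → ℝ) (hg : ∀ i a, 0 ≤ g i a)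
    (hswap : ∀ (i j : Fin m) (a b : ℕ), i ≤ j → a ≤ b → g i a * g j b ≤ g i b * g j a)
    (β : Fin m → ℕ) (hβ : Antitone β) (σ : Equiv.Perm (Fin m)) :
    ∏ k, g (σ k) (β k) ≤ ∏ k, g k (β k) := by
  suffices h : ∀ n (σ : Equiv.Perm (Fin m)), σ.support.card ≤ n →
      ∏ k, g (σ k) (β k) ≤ ∏ k, g k (β k) from h _ σ le_rfl
  intro n
  induction n with
  | zero =>
    intro σ hσ
    have : σ = 1 := by
      rw [← Equiv.Perm.support_eq_empty_iff]
      exact Finset.card_eq_zero.mp (Nat.le_zero.mp hσ)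
    simp [this]
  | succ n ih =>
    intro σ hσ
    by_cases h1 : σ = 1
    · simp [h1]
    have hne : σ.support.Nonempty := by
      rw [Finset.nonempty_iff_ne_empty]
      intro h; exact h1 (Equiv.Perm.support_eq_empty_iff.mp h)
    set k := σ.support.min' hne with hk
    have hkmem : k ∈ σ.support := Finset.min'_mem _ _
    have hkne : σ k ≠ k := Equiv.Perm.mem_support.mp hkmem
    set j := σ⁻¹ k with hj
    have hσj : σ j = k := Equiv.apply_symm_apply σ k
    have hjne : j ≠ k := by
      intro h; rw [h] at hσj; exact hkne hσj
    have hjmem : j ∈ σ.support := by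
      rw [Equiv.Perm.mem_support, hσj]; exact fun h => hjne h.symm
    have hkj : k ≤ j := Finset.min'_le _ _ hjmem
    have hσkmem : σ k ∈ σ.support := Equiv.Perm.apply_mem_support.mpr hkmem
    have hkσk : k ≤ σ k := Finset.min'_le _ _ hσkmem
    set σ' := σ * Equiv.swap k j with hσ'
    have hσ'k : σ' k = k := by
      rw [hσ', Equiv.Perm.mul_apply, Equiv.swap_apply_left, hσj]
    have hσ'j : σ' j = σ k := by
      rw [hσ', Equiv.Perm.mul_apply, Equiv.swap_apply_right]
    have hσ'other : ∀ l, l ≠ k → l ≠ j → σ' l = σ l := by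
      intro l hlk hlj
      rw [hσ', Equiv.Perm.mul_apply, Equiv.swap_apply_of_ne_of_ne hlk hlj]
    have hsub : σ'.support ⊆ σ.support.erase k := by
      intro l hl
      rw [Equiv.Perm.mem_support] at hl
      rcases eq_or_ne l k with rfl | hlk
      · exact absurd hσ'k hl
      rw [Finset.mem_erase]
      refine ⟨hlk, ?_⟩
      rcases eq_or_ne l j with rfl | hlj
      · exact hjmem
      · rw [Equiv.Perm.mem_support, ← hσ'other l hlk hlj]; exact hl
    have hcard : σ'.support.card ≤ n := by
      have h1 : σ'.support.card ≤ (σ.support.erase k).card := Finset.card_le_card hsub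
      have h2 : (σ.support.erase k).card = σ.support.card - 1 :=
        Finset.card_erase_of_mem hkmem
      omega
    have step : ∏ l, g (σ l) (β l) ≤ ∏ l, g (σ' l) (β l) := by
      have hjmem' : j ∈ Finset.univ.erase k := Finset.mem_erase.mpr ⟨hjne, Finset.mem_univ j⟩
      rw [← Finset.mul_prod_erase Finset.univ _ (Finset.mem_univ k),
        ← Finset.mul_prod_erase _ _ hjmem',
        ← Finset.mul_prod_erase Finset.univ (fun l => g (σ' l) (β l)) (Finset.mem_univ k),
        ← Finset.mul_prod_erase _ (fun l => g (σ' l) (β l)) hjmem']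
      have hrest : ∏ l ∈ (Finset.univ.erase k).erase j, g (σ l) (β l)
          = ∏ l ∈ (Finset.univ.erase k).erase j, g (σ' l) (β l) := by
        apply Finset.prod_congr rfl
        intro l hl
        rw [Finset.mem_erase, Finset.mem_erase] at hl
        rw [hσ'other l hl.2.1 hl.1]
      rw [hrest, ← mul_assoc, ← mul_assoc]
      apply mul_le_mul_of_nonneg_right _ (Finset.prod_nonneg fun l _ => hg _ _)
      rw [hσ'k, hσ'j, hσj]
      have := hswap k (σ k) (β j) (β k) hkσk (hβ hkj)
      calc g (σ k) (β k) * g k (β j) = g k (β j) * g (σ k) (β k) := by ring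
        _ ≤ g k (β k) * g (σ k) (β j) := this
        _ = g k (β k) * g (σ' j) (β j) := by rw [hσ'j]
        _ = g k (β k) * g (σ k) (β j) := by rw [hσ'j]
    exact step.trans (ih σ' hcard)

lemma nth_le_prime_seq {m : ℕ} (q : Fin m → ℕ) (hqprime : ∀ k, (q k).Prime)
    (hqmono : StrictMono q) : ∀ k : Fin m, Nat.nth Nat.Prime k.val ≤ q k := by
  suffices h : ∀ n (hn : n < m), Nat.nth Nat.Prime n ≤ q ⟨n, hn⟩ by
    intro k; have := h k.val k.isLt; simpa using this
  intro n
  induction n with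
  | zero =>
    intro hn
    rw [Nat.nth_zero]
    exact Nat.sInf_le (hqprime _)
  | succ n ihn =>
    intro hn
    have hn' : n < m := by omega
    by_contra hlt
    push_neg at hlt
    have h1 : q ⟨n+1, hn⟩ ≤ Nat.nth Nat.Prime n :=
      Nat.le_nth_of_lt_nth_succ hlt (hqprime _)
    have h2 : q ⟨n, hn'⟩ < q ⟨n+1, hn⟩ := hqmono (by simp [Fin.lt_def])
    have := ihn hn'
    omega

theorem stmt_7 (m : ℕ) (hm : 1 ≤ m) (q : Fin m → ℕ) (α β : Fin m → ℕ)
    (hqprime : ∀ k, (q k).Prime) (hqmono : StrictMono q)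
    (hα : ∀ k, 1 ≤ α k)
    (π : Equiv.Perm (Fin m)) (hβ : ∀ k, β k = α (π k))
    (hβmono : Antitone β) :
    Real.exp Real.eulerMascheroniConstant *
        Real.log (Real.log (∏ k, (q k : ℝ) ^ (α k : ℕ))) -
      ∏ k, ((q k : ℝ) - (q k : ℝ) ^ (-(α k : ℝ))) / ((q k : ℝ) - 1) ≥
    Real.exp Real.eulerMascheroniConstant *
        Real.log (Real.log (∏ k : Fin m, (Nat.nth Nat.Prime k.val : ℝ) ^ (β k : ℕ))) -
      ∏ k : Fin m, ((Nat.nth Nat.Prime k.val : ℝ) - (Nat.nth Nat.Prime k.val : ℝ) ^ (-(β k : ℝ))) /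
        ((Nat.nth Nat.Prime k.val : ℝ) - 1) := by
  set p : Fin m → ℕ := fun k => Nat.nth Nat.Prime k.val with hp
  have hPprime : ∀ k : Fin m, (p k).Prime := fun k =>
    Nat.nth_mem_of_infinite Nat.infinite_setOf_prime k.val
  have hq2 : ∀ k, (2:ℝ) ≤ (q k : ℝ) := fun k => by exact_mod_cast (hqprime k).two_le
  have hp2 : ∀ k, (2:ℝ) ≤ (p k : ℝ) := fun k => by exact_mod_cast (hPprime k).two_le
  have hpq : ∀ k, (p k : ℝ) ≤ (q k : ℝ) := fun k => by
    exact_mod_cast nth_le_prime_seq q hqprime hqmono k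
  have hpmono : ∀ i j : Fin m, i ≤ j → (p i : ℝ) ≤ (p j : ℝ) := fun i j hij => by
    exact_mod_cast Nat.nth_monotone Nat.infinite_setOf_prime (by exact_mod_cast hij : i.val ≤ j.val)
  have hqm : ∀ i j : Fin m, i ≤ j → (q i : ℝ) ≤ (q j : ℝ) := fun i j hij => by
    exact_mod_cast hqmono.monotone hij
  -- Part B : products of sigma factors
  have hB : (∏ k, ((q k : ℝ) - (q k : ℝ) ^ (-(α k : ℝ))) / ((q k : ℝ) - 1)) ≤
      ∏ k : Fin m, ((p k : ℝ) - (p k : ℝ) ^ (-(β k : ℝ))) / ((p k : ℝ) - 1) := by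
    have e1 : (∏ k, ((q k : ℝ) - (q k : ℝ) ^ (-(α k : ℝ))) / ((q k : ℝ) - 1)) =
        ∏ k, Hs (q k : ℝ) (α k) :=
      Finset.prod_congr rfl fun k _ => factor_eq (hq2 k) (α k)
    have e2 : (∏ k : Fin m, ((p k : ℝ) - (p k : ℝ) ^ (-(β k : ℝ))) / ((p k : ℝ) - 1)) =
        ∏ k, Hs (p k : ℝ) (β k) :=
      Finset.prod_congr rfl fun k _ => factor_eq (hp2 k) (β k)
    rw [e1, e2]
    have s1 : (∏ k, Hs (q k : ℝ) (α k)) = ∏ k, Hs (q (π k) : ℝ) (β k) := by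
      rw [← Equiv.prod_comp π (fun k => Hs (q k : ℝ) (α k))]
      exact Finset.prod_congr rfl fun k _ => by rw [hβ k]
    have s2 : (∏ k, Hs (q (π k) : ℝ) (β k)) ≤ ∏ k, Hs (q k : ℝ) (β k) := by
      apply rearr (fun i a => Hs (q i : ℝ) a)
        (fun i a => Hs_nonneg (by linarith [hq2 i]) a)
        (fun i j a b hij hab => Hs_swap (by linarith [hq2 i]) (hqm i j hij) hab)
        β hβmono π
    have s3 : (∏ k, Hs (q k : ℝ) (β k)) ≤ ∏ k, Hs (p k : ℝ) (β k) := by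
      apply Finset.prod_le_prod
      · intro k _; exact Hs_nonneg (by linarith [hq2 k]) _
      · intro k _; exact Hs_anti (by linarith [hp2 k]) (hpq k) (β k)
    calc (∏ k, Hs (q k : ℝ) (α k)) = ∏ k, Hs (q (π k) : ℝ) (β k) := s1
      _ ≤ ∏ k, Hs (q k : ℝ) (β k) := s2
      _ ≤ ∏ k, Hs (p k : ℝ) (β k) := s3
  -- Part A : the numbers
  have hNpβα : (∏ k : Fin m, (p k : ℝ) ^ (β k)) ≤ ∏ k : Fin m, (p k : ℝ) ^ (α k) := by
    have key : (∏ k, ((p (π k) : ℝ)⁻¹) ^ (β k)) ≤ ∏ k, ((p k : ℝ)⁻¹) ^ (β k) := by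
      apply rearr (fun i a => ((p i : ℝ)⁻¹) ^ a)
        (fun i a => by positivity)
        (fun i j a b hij hab => by
          have h1 : (0:ℝ) ≤ (p j : ℝ)⁻¹ := by positivity
          have h2 : ((p j : ℝ))⁻¹ ≤ ((p i : ℝ))⁻¹ :=
            inv_anti₀ (by linarith [hp2 i]) (hpmono i j hij)
          calc ((p i:ℝ)⁻¹) ^ a * ((p j:ℝ)⁻¹) ^ b = ((p j:ℝ)⁻¹) ^ b * ((p i:ℝ)⁻¹) ^ a := by ring
            _ ≤ ((p i:ℝ)⁻¹) ^ b * ((p j:ℝ)⁻¹) ^ a := pow_pow_swap h1 h2 hab)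
        β hβmono π
    have hinv : ∀ (f : Fin m → ℝ) (e : Fin m → ℕ),
        (∏ k, ((f k)⁻¹) ^ (e k)) = (∏ k, (f k) ^ (e k))⁻¹ := by
      intro f e
      rw [← Finset.prod_inv_distrib]
      exact Finset.prod_congr rfl fun k _ => by rw [inv_pow]
    rw [hinv (fun k => (p (π k) : ℝ)) β, hinv (fun k => (p k : ℝ)) β] at key
    have hpos1 : (0:ℝ) < ∏ k, (p k : ℝ) ^ (β k) := by
      apply Finset.prod_pos; intro k _; have := hp2 k; positivity
    have hpos2 : (0:ℝ) < ∏ k, (p (π k) : ℝ) ^ (β k) := by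
      apply Finset.prod_pos; intro k _
      have := hp2 (π k); positivity
    have h5 : (∏ k, (p k : ℝ) ^ (β k)) ≤ ∏ k, (p (π k) : ℝ) ^ (β k) :=
      (inv_le_inv₀ hpos2 hpos1).mp key
    have h6 : (∏ k, (p (π k) : ℝ) ^ (β k)) = ∏ k, (p k : ℝ) ^ (α k) := by
      rw [← Equiv.prod_comp π (fun k => (p k : ℝ) ^ (α k))]
      exact Finset.prod_congr rfl fun k _ => by rw [hβ k]
    rw [← h6]; exact h5
  have hNαq : (∏ k : Fin m, (p k : ℝ) ^ (α k)) ≤ ∏ k : Fin m, (q k : ℝ) ^ (α k) := by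
    apply Finset.prod_le_prod
    · intro k _; positivity
    · intro k _; exact pow_le_pow_left₀ (by linarith [hp2 k]) (hpq k) (α k)
  have hNpNq : (∏ k : Fin m, (p k : ℝ) ^ (β k)) ≤ ∏ k : Fin m, (q k : ℝ) ^ (α k) :=
    hNpβα.trans hNαq
  have hNp2 : (2:ℝ) ≤ ∏ k : Fin m, (p k : ℝ) ^ (β k) := by
    have k0 : Fin m := ⟨0, hm⟩
    have h1 : (2:ℝ) ≤ (p k0 : ℝ) ^ (β k0) := by
      have hb : β k0 ≠ 0 := by
        have := hα (π k0); rw [hβ k0]; omega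
      calc (2:ℝ) ≤ (p k0 : ℝ) := hp2 k0
        _ ≤ (p k0 : ℝ) ^ (β k0) := le_self_pow₀ (by linarith [hp2 k0]) hb
    have hrest : (1:ℝ) ≤ ∏ k ∈ Finset.univ.erase k0, (p k : ℝ) ^ (β k) := by
      have := Finset.prod_le_prod (s := Finset.univ.erase k0)
        (f := fun _ : Fin m => (1:ℝ)) (g := fun k : Fin m => (p k : ℝ) ^ (β k))
        (fun i _ => zero_le_one)
        (fun i _ => one_le_pow₀ (by linarith [hp2 i]))
      simpa using this
    calc (2:ℝ) ≤ (p k0 : ℝ) ^ (β k0) := h1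
      _ ≤ (p k0 : ℝ) ^ (β k0) * ∏ k ∈ Finset.univ.erase k0, (p k : ℝ) ^ (β k) :=
        le_mul_of_one_le_right (by positivity) hrest
      _ = ∏ k : Fin m, (p k : ℝ) ^ (β k) :=
        Finset.mul_prod_erase Finset.univ (fun k : Fin m => (p k : ℝ) ^ (β k)) (Finset.mem_univ k0)
  rw [ge_iff_le]
  apply sub_le_sub _ hB
  apply mul_le_mul_of_nonneg_left _ (Real.exp_pos _).le
  have hNpos : (0:ℝ) < ∏ k : Fin m, (p k : ℝ) ^ (β k) := by linarith
  exact Real.log_le_log (Real.log_pos (by linarith)) (Real.log_le_log hNpos hNpNq)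
end

section
/- Fix m ≥ 1 and positive integers α_1, ..., α_m, and for prime numbers q_1 < q_2 < ... < q_m define f(q_1, ..., q_m) = e^γ · log log(∏_{h=1}^m q_h^{α_h}) − ∏_{h=1}^m (q_h − q_h^{−α_h})/(q_h − 1). Then for every choice of primes q_1 < q_2 < ... < q_m one has f(q_1, ..., q_m) ≥ f(p_1, p_2, ..., p_m); that is, the minimum of f over increasing m-tuples of primes is attained at the first m primes (2, 3, 5, ..., p_m). -/
private lemma stmt8_rpow_eq (n a : ℕ) (hn : 2 ≤ n) :
    (n : ℝ) ^ (-(a : ℝ)) = ((n : ℝ) ^ a)⁻¹ := by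
  rw [Real.rpow_neg (by positivity), Real.rpow_natCast]

private lemma stmt8_one_le (n a : ℕ) (hn : 2 ≤ n) (ha : 1 ≤ a) :
    1 ≤ ((n : ℝ) - (n : ℝ) ^ (-(a : ℝ))) / ((n : ℝ) - 1) := by
  rw [stmt8_rpow_eq n a hn]
  have hN : (2 : ℝ) ≤ (n : ℝ) := by exact_mod_cast hn
  have hpow : (1 : ℝ) ≤ (n : ℝ) ^ a := one_le_pow₀ (by linarith)
  have hx : ((n : ℝ) ^ a)⁻¹ ≤ 1 := by
    rw [inv_le_one_iff₀]; right; exact hpow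
  rw [le_div_iff₀ (by linarith)]
  have : (0:ℝ) < (n : ℝ) ^ a := by positivity
  linarith

private lemma stmt8_anti (p q a : ℕ) (hp : 2 ≤ p) (hpq : p ≤ q) (ha : 1 ≤ a) :
    ((q : ℝ) - (q : ℝ) ^ (-(a : ℝ))) / ((q : ℝ) - 1) ≤
      ((p : ℝ) - (p : ℝ) ^ (-(a : ℝ))) / ((p : ℝ) - 1) := by
  rcases eq_or_lt_of_le hpq with rfl | hlt
  · exact le_rfl
  have hq : 2 ≤ q := le_trans hp hpq
  rw [stmt8_rpow_eq p a hp, stmt8_rpow_eq q a hq]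
  have hP : (2 : ℝ) ≤ (p : ℝ) := by exact_mod_cast hp
  have hQ : (p : ℝ) + 1 ≤ (q : ℝ) := by exact_mod_cast hlt
  set P := (p : ℝ)
  set Q := (q : ℝ)
  set x := (P ^ a)⁻¹ with hxdef
  set y := (Q ^ a)⁻¹ with hydef
  have hPa : P ≤ P ^ a := by
    calc P = P ^ 1 := (pow_one P).symm
    _ ≤ P ^ a := pow_le_pow_right₀ (by linarith) ha
  have hPapos : (0:ℝ) < P ^ a := by positivity
  have hxP : x * P ≤ 1 := by
    rw [hxdef]
    rw [inv_mul_le_iff₀ hPapos]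
    simpa using hPa
  have hy : 0 < y := by positivity
  rw [div_le_div_iff₀ (by linarith) (by linarith)]
  have h1 : x * P * (Q - 1) ≤ 1 * (Q - 1) :=
    mul_le_mul_of_nonneg_right hxP (by linarith)
  have h2 : (0:ℝ) ≤ (P - 1) * (Q - P - 1) :=
    mul_nonneg (by linarith) (by linarith)
  have h3 : (0:ℝ) ≤ y * (P - 1) := mul_nonneg (le_of_lt hy) (by linarith)
  nlinarith [h1, h2, h3, hP, hQ]

theorem stmt_8 (m : ℕ) (hm : 1 ≤ m) (α : Fin m → ℕ) (hα : ∀ k, 1 ≤ α k)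
    (f : (Fin m → ℕ) → ℝ)
    (hf : ∀ q : Fin m → ℕ, f q =
      Real.exp Real.eulerMascheroniConstant *
          Real.log (Real.log (∏ h, (q h : ℝ) ^ (α h : ℕ))) -
        ∏ h, ((q h : ℝ) - (q h : ℝ) ^ (-(α h : ℝ))) / ((q h : ℝ) - 1))
    (q : Fin m → ℕ) (hqprime : ∀ k, (q k).Prime) (hqmono : StrictMono q) :
    f q ≥ f (fun k => Nat.nth Nat.Prime k.val) := by
  set p : Fin m → ℕ := fun k => Nat.nth Nat.Prime k.val with hpdef
  have hpprime : ∀ k, (p k).Prime := fun k =>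
    Nat.nth_mem_of_infinite Nat.infinite_setOf_prime k.val
  -- p k ≤ q k
  have hle : ∀ k : Fin m, p k ≤ q k := by
    intro k
    obtain ⟨kv, hkv⟩ := k
    induction kv with
    | zero =>
      show Nat.nth Nat.Prime 0 ≤ q ⟨0, hkv⟩
      rw [Nat.nth_prime_zero_eq_two]
      exact (hqprime _).two_le
    | succ n ih =>
      have hn : n < m := Nat.lt_of_succ_lt hkv
      by_contra hcon
      push_neg at hcon
      have h1 : q ⟨n + 1, hkv⟩ ≤ Nat.nth Nat.Prime n :=
        Nat.le_nth_of_lt_nth_succ hcon (hqprime _)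
      have h2 : Nat.nth Nat.Prime n ≤ q ⟨n, hn⟩ := ih hn
      have h3 : q ⟨n, hn⟩ < q ⟨n + 1, hkv⟩ := hqmono (by simp [Fin.lt_def])
      omega
  have hp2 : ∀ k, 2 ≤ p k := fun k => (hpprime k).two_le
  have hq2 : ∀ k, 2 ≤ q k := fun k => (hqprime k).two_le
  rw [hf q, hf p, ge_iff_le]
  -- product term
  have hprod : (∏ h, ((q h : ℝ) - (q h : ℝ) ^ (-(α h : ℝ))) / ((q h : ℝ) - 1)) ≤
      ∏ h, ((p h : ℝ) - (p h : ℝ) ^ (-(α h : ℝ))) / ((p h : ℝ) - 1) := by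
    apply Finset.prod_le_prod
    · intro i _
      exact le_trans zero_le_one (stmt8_one_le (q i) (α i) (hq2 i) (hα i))
    · intro i _
      exact stmt8_anti (p i) (q i) (α i) (hp2 i) (hle i) (hα i)
  -- log term
  have hPprod : (2 : ℝ) ≤ ∏ h, (p h : ℝ) ^ (α h : ℕ) := by
    have h1 : ∀ h : Fin m, (1:ℝ) ≤ (p h : ℝ) ^ (α h : ℕ) := by
      intro h
      exact one_le_pow₀ (by exact_mod_cast (hp2 h).trans' (by norm_num))
    have i0 : Fin m := ⟨0, hm⟩
    have h2le : ∀ h : Fin m, (2:ℝ) ≤ (p h : ℝ) ^ (α h : ℕ) := by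
      intro h
      calc (2:ℝ) ≤ (p h : ℝ) := by exact_mod_cast hp2 h
        _ = (p h : ℝ) ^ 1 := (pow_one _).symm
        _ ≤ (p h : ℝ) ^ (α h) :=
            pow_le_pow_right₀ (by exact_mod_cast (hp2 h).trans' (by norm_num)) (hα h)
    have key := Finset.prod_le_prod (s := Finset.univ)
      (f := fun h : Fin m => if h = i0 then (2:ℝ) else 1)
      (g := fun h : Fin m => ((p h : ℝ)) ^ (α h))
      (by intro i _; split <;> norm_num)
      (by intro i _; split
          · exact h2le i
          · exact h1 i)
    calc (2:ℝ) = ∏ h : Fin m, if h = i0 then (2:ℝ) else 1 := by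
          rw [Finset.prod_ite_eq' Finset.univ i0 (fun _ => (2:ℝ))]
          simp
      _ ≤ ∏ h, (p h : ℝ) ^ (α h : ℕ) := key
  have hPQ : (∏ h, (p h : ℝ) ^ (α h : ℕ)) ≤ ∏ h, (q h : ℝ) ^ (α h : ℕ) := by
    apply Finset.prod_le_prod
    · intro i _; positivity
    · intro i _
      exact pow_le_pow_left₀ (by positivity) (by exact_mod_cast hle i) _
  have hlogpos : 0 < Real.log (∏ h, (p h : ℝ) ^ (α h : ℕ)) :=
    Real.log_pos (by linarith)
  have hloglog : Real.log (Real.log (∏ h, (p h : ℝ) ^ (α h : ℕ))) ≤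
      Real.log (Real.log (∏ h, (q h : ℝ) ^ (α h : ℕ))) :=
    Real.log_le_log (by positivity) (Real.log_le_log (by linarith) hPQ)
  have hmul := mul_le_mul_of_nonneg_left hloglog
    (Real.exp_nonneg Real.eulerMascheroniConstant)
  linarith
end

section
/- For each m ≥ 1 let α^{(m)}_1 ≥ α^{(m)}_2 ≥ ... ≥ α^{(m)}_m be a nonincreasing m-tuple of positive integers, set n_m = ∏_{k=1}^m p_k^{α^{(m)}_k} and ε_m = (∑_{k=1}^m α^{(m)}_k·log p_k)/(∑_{k=1}^m log p_k) − 1. Define K(m) = min { k ∈ {1,...,m} : α^{(m)}_k ≤ k } when this set is nonempty, and K(m) = m otherwise. If ε_m → 0 as m → ∞, then the set { k ∈ {1,...,m} : α^{(m)}_k ≤ k } is nonempty for all sufficiently large m, and K(m)/m → 0 as m → ∞. -/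
open Finset

private lemma nth_prime_le_two_pow (i : ℕ) : Nat.nth Nat.Prime i ≤ 2 ^ (i + 1) := by
  induction i with
  | zero => simp [Nat.nth_prime_zero_eq_two]
  | succ i ih =>
    obtain ⟨p, hp, h1, h2⟩ := Nat.exists_prime_lt_and_le_two_mul (Nat.nth Nat.Prime i)
      (by have := (Nat.prime_nth_prime i).two_le; omega)
    have hinf := Nat.infinite_setOf_prime
    have hcp : Nat.nth Nat.Prime (Nat.count Nat.Prime p) = p := Nat.nth_count hp
    have hlt : i < Nat.count Nat.Prime p := by
      rw [← Nat.nth_lt_nth hinf, hcp]; exact h1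
    calc Nat.nth Nat.Prime (i + 1) ≤ Nat.nth Nat.Prime (Nat.count Nat.Prime p) :=
          (Nat.nth_le_nth hinf).2 hlt
      _ = p := hcp
      _ ≤ 2 * Nat.nth Nat.Prime i := h2
      _ ≤ 2 * 2 ^ (i + 1) := by omega
      _ = 2 ^ (i + 1 + 1) := by ring

private lemma gauss_icc (t : ℕ) : 2 * ∑ k ∈ Icc 1 t, k = t * (t + 1) := by
  induction t with
  | zero => simp
  | succ t ih =>
    rw [Finset.sum_Icc_succ_top (by omega), Nat.mul_add, ih]
    ring

open Finset in
theorem stmt_14 (α : ℕ → ℕ → ℕ)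
    (hαpos : ∀ m k, 1 ≤ k → k ≤ m → 1 ≤ α m k)
    (hαmono : ∀ m j k, 1 ≤ j → j ≤ k → k ≤ m → α m k ≤ α m j)
    (n : ℕ → ℕ) (hn : ∀ m, n m = ∏ k ∈ Icc 1 m, Nat.nth Nat.Prime (k - 1) ^ α m k)
    (ε : ℕ → ℝ)
    (hε : ∀ m, ε m =
      (∑ k ∈ Icc 1 m, (α m k : ℝ) * Real.log (Nat.nth Nat.Prime (k - 1))) /
        (∑ k ∈ Icc 1 m, Real.log (Nat.nth Nat.Prime (k - 1))) - 1)
    (K : ℕ → ℕ)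
    (hK : ∀ m, K m = if h : ((Icc 1 m).filter (fun k => α m k ≤ k)).Nonempty
      then ((Icc 1 m).filter (fun k => α m k ≤ k)).min' h else m)
    (hε0 : Filter.Tendsto ε Filter.atTop (nhds 0)) :
    (∀ᶠ m in Filter.atTop, ((Icc 1 m).filter (fun k => α m k ≤ k)).Nonempty) ∧
      Filter.Tendsto (fun m => (K m : ℝ) / (m : ℝ)) Filter.atTop (nhds 0) := by
  set L : ℕ → ℝ := fun k => Real.log (Nat.nth Nat.Prime (k - 1)) with hLdef
  have hlog2 : (0:ℝ) < Real.log 2 := Real.log_pos (by norm_num)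
  have hL2 : ∀ k, Real.log 2 ≤ L k := by
    intro k
    apply Real.log_le_log (by norm_num)
    exact_mod_cast (Nat.prime_nth_prime (k - 1)).two_le
  have hLpos : ∀ k, 0 ≤ L k := fun k => le_trans hlog2.le (hL2 k)
  have hLub : ∀ k, 1 ≤ k → L k ≤ (k : ℝ) * Real.log 2 := by
    intro k hk
    have h1 : (Nat.nth Nat.Prime (k - 1) : ℝ) ≤ (2 : ℝ) ^ k := by
      have := nth_prime_le_two_pow (k - 1)
      have h2 : k - 1 + 1 = k := by omega
      rw [h2] at this
      exact_mod_cast this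
    calc L k ≤ Real.log ((2:ℝ) ^ k) := by
          apply Real.log_le_log _ h1
          exact_mod_cast (Nat.prime_nth_prime (k - 1)).pos
      _ = (k : ℝ) * Real.log 2 := by rw [Real.log_pow]
  have hD : ∀ m, 1 ≤ m → 0 < ∑ k ∈ Icc 1 m, L k := by
    intro m hm
    have : (m : ℝ) * Real.log 2 ≤ ∑ k ∈ Icc 1 m, L k := by
      calc (m : ℝ) * Real.log 2 = ∑ _k ∈ Icc 1 m, Real.log 2 := by
            rw [Finset.sum_const, Nat.card_Icc]
            simp [nsmul_eq_mul]
        _ ≤ ∑ k ∈ Icc 1 m, L k := Finset.sum_le_sum fun k _ => hL2 k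
    have hm' : (1:ℝ) ≤ (m:ℝ) := by exact_mod_cast hm
    nlinarith
  have hDub : ∀ m, (∑ k ∈ Icc 1 m, L k) ≤ (m : ℝ) * ((m : ℝ) * Real.log 2) := by
    intro m
    calc (∑ k ∈ Icc 1 m, L k) ≤ ∑ k ∈ Icc 1 m, (m : ℝ) * Real.log 2 := by
          apply Finset.sum_le_sum
          intro k hk
          obtain ⟨hk1, hk2⟩ := Finset.mem_Icc.1 hk
          calc L k ≤ (k : ℝ) * Real.log 2 := hLub k hk1
            _ ≤ (m : ℝ) * Real.log 2 := by
                apply mul_le_mul_of_nonneg_right _ hlog2.le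
                exact_mod_cast hk2
      _ = (m : ℝ) * ((m : ℝ) * Real.log 2) := by
          rw [Finset.sum_const, Nat.card_Icc]
          simp [nsmul_eq_mul]
          try ring
  have key : ∀ m, 1 ≤ m → ε m * (∑ k ∈ Icc 1 m, L k)
      = ∑ k ∈ Icc 1 m, ((α m k : ℝ) - 1) * L k := by
    intro m hm
    have hDne : (∑ k ∈ Icc 1 m, L k) ≠ 0 := (hD m hm).ne'
    have expand : ∑ k ∈ Icc 1 m, ((α m k : ℝ) - 1) * L k
        = (∑ k ∈ Icc 1 m, (α m k : ℝ) * L k) - ∑ k ∈ Icc 1 m, L k := by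
      rw [← Finset.sum_sub_distrib]
      apply Finset.sum_congr rfl
      intro k _; ring
    rw [hε m, expand, sub_mul, div_mul_cancel₀ _ hDne, one_mul]
  -- Part 1
  have part1 : ∀ m, 1 ≤ m → ε m < 1 →
      ((Icc 1 m).filter (fun k => α m k ≤ k)).Nonempty := by
    intro m hm hlt
    by_contra hne
    rw [Finset.not_nonempty_iff_eq_empty] at hne
    have hall : ∀ k ∈ Icc 1 m, k + 1 ≤ α m k := by
      intro k hk
      by_contra h
      have hkmem : k ∈ (Icc 1 m).filter (fun k => α m k ≤ k) :=
        Finset.mem_filter.2 ⟨hk, by omega⟩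
      rw [hne] at hkmem
      exact absurd hkmem (Finset.notMem_empty k)
    have hDm := hD m hm
    have hle : (∑ k ∈ Icc 1 m, L k) ≤ ε m * (∑ k ∈ Icc 1 m, L k) := by
      rw [key m hm]
      apply Finset.sum_le_sum
      intro k hk
      have h1 : (1:ℝ) ≤ (α m k : ℝ) - 1 := by
        have := hall k hk
        have hk1 : 1 ≤ k := (Finset.mem_Icc.1 hk).1
        have : 2 ≤ α m k := by omega
        have : (2:ℝ) ≤ (α m k : ℝ) := by exact_mod_cast this
        linarith
      exact le_mul_of_one_le_left (hLpos k) h1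
    nlinarith
  -- Part 2 quantitative bound
  have part2 : ∀ m, 1 ≤ m → ε m < 1 →
      ((K m : ℝ) / (m : ℝ)) ^ 2 ≤ 2 * ε m + 1 / (m : ℝ) := by
    intro m hm hlt
    obtain hS := part1 m hm hlt
    have hKdef : K m = ((Icc 1 m).filter (fun k => α m k ≤ k)).min' hS := by
      rw [hK m, dif_pos hS]
    have hKmem : K m ∈ (Icc 1 m).filter (fun k => α m k ≤ k) := by
      rw [hKdef]; exact Finset.min'_mem _ hS
    obtain ⟨hKIcc, _⟩ := Finset.mem_filter.1 hKmem
    obtain ⟨hK1, hKm⟩ := Finset.mem_Icc.1 hKIcc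
    have hDm := hD m hm
    -- lower bound ε m * D ≥ log 2 * Σ_{k=1}^{K-1} k
    have step1 : ∑ k ∈ Icc 1 (K m - 1), ((α m k : ℝ) - 1) * L k
        ≤ ε m * (∑ k ∈ Icc 1 m, L k) := by
      rw [key m hm]
      apply Finset.sum_le_sum_of_subset_of_nonneg
        (Finset.Icc_subset_Icc_right (by omega))
      intro k hk _
      obtain ⟨hk1, hk2⟩ := Finset.mem_Icc.1 hk
      have h1 : 1 ≤ α m k := hαpos m k hk1 hk2
      have h1' : (1:ℝ) ≤ (α m k : ℝ) := by exact_mod_cast h1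
      exact mul_nonneg (by linarith) (hLpos k)
    have step2 : ∀ k ∈ Icc 1 (K m - 1), (k : ℝ) * Real.log 2 ≤ ((α m k : ℝ) - 1) * L k := by
      intro k hk
      obtain ⟨hk1, hk2⟩ := Finset.mem_Icc.1 hk
      have hks : k + 1 ≤ α m k := by
        by_contra h
        have hkmem : k ∈ (Icc 1 m).filter (fun k => α m k ≤ k) :=
          Finset.mem_filter.2 ⟨Finset.mem_Icc.2 ⟨hk1, by omega⟩, by omega⟩
        have := Finset.min'_le _ k hkmem
        rw [← hKdef] at this
        omega
      have h1 : (k : ℝ) ≤ (α m k : ℝ) - 1 := by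
        have : (k + 1 : ℝ) ≤ (α m k : ℝ) := by exact_mod_cast hks
        linarith
      have hk0 : (0:ℝ) ≤ (k : ℝ) := by positivity
      exact mul_le_mul h1 (hL2 k) hlog2.le (by linarith)
    have hgauss : (2 : ℝ) * ∑ k ∈ Icc 1 (K m - 1), (k : ℝ)
        = ((K m : ℝ) - 1) * (K m : ℝ) := by
      have := gauss_icc (K m - 1)
      have h2 : (K m - 1) + 1 = K m := by omega
      rw [h2] at this
      have : ((2 * ∑ k ∈ Icc 1 (K m - 1), k : ℕ) : ℝ) = (((K m - 1) * K m : ℕ) : ℝ) := by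
        exact_mod_cast congrArg Nat.cast this
      push_cast [Nat.cast_sub hK1] at this
      linarith
    have step3 : Real.log 2 * (((K m : ℝ) - 1) * (K m : ℝ) / 2)
        ≤ ε m * (∑ k ∈ Icc 1 m, L k) := by
      calc Real.log 2 * (((K m : ℝ) - 1) * (K m : ℝ) / 2)
          = ∑ k ∈ Icc 1 (K m - 1), (k : ℝ) * Real.log 2 := by
            rw [← Finset.sum_mul]; nlinarith [hgauss]
        _ ≤ ∑ k ∈ Icc 1 (K m - 1), ((α m k : ℝ) - 1) * L k := Finset.sum_le_sum step2
        _ ≤ ε m * (∑ k ∈ Icc 1 m, L k) := step1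
    have hεnn : 0 ≤ ε m := by
      have h0 : 0 ≤ ε m * (∑ k ∈ Icc 1 m, L k) := by
        rw [key m hm]
        apply Finset.sum_nonneg
        intro k hk
        obtain ⟨hk1, hk2⟩ := Finset.mem_Icc.1 hk
        have h1 : (1:ℝ) ≤ (α m k : ℝ) := by exact_mod_cast hαpos m k hk1 hk2
        exact mul_nonneg (by linarith) (hLpos k)
      nlinarith
    have step4 : ε m * (∑ k ∈ Icc 1 m, L k) ≤ ε m * ((m:ℝ) * ((m:ℝ) * Real.log 2)) :=
      mul_le_mul_of_nonneg_left (hDub m) hεnn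
    -- conclude
    have hKK : ((K m : ℝ) - 1) * (K m : ℝ) ≤ 2 * ε m * (m : ℝ) ^ 2 := by
      nlinarith [step3, step4]
    have hm' : (1:ℝ) ≤ (m:ℝ) := by exact_mod_cast hm
    have hKm' : (K m : ℝ) ≤ (m : ℝ) := by exact_mod_cast hKm
    rw [div_pow, div_le_iff₀ (by positivity)]
    have hK0 : (0:ℝ) ≤ (K m : ℝ) := by positivity
    have hmm : (1 / (m:ℝ)) * (m:ℝ) ^ 2 = (m:ℝ) := by
      field_simp
    nlinarith [hKK, hKm', hm', hmm]
  -- events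
  have hev : ∀ᶠ m in Filter.atTop, 1 ≤ m ∧ ε m < 1 :=
    (Filter.eventually_ge_atTop 1).and
      (hε0.eventually_lt_const (by norm_num : (0:ℝ) < 1))
  constructor
  · exact hev.mono fun m ⟨h1, h2⟩ => part1 m h1 h2
  · apply squeeze_zero' (g := fun m => Real.sqrt (2 * ε m + 1 / (m : ℝ)))
    · exact Filter.Eventually.of_forall fun m => by positivity
    · apply hev.mono
      intro m ⟨h1, h2⟩
      have h3 := part2 m h1 h2
      have h0 : (0:ℝ) ≤ (K m : ℝ) / (m : ℝ) := by positivity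
      calc (K m : ℝ) / (m : ℝ) = Real.sqrt (((K m : ℝ) / (m : ℝ)) ^ 2) :=
            (Real.sqrt_sq h0).symm
        _ ≤ Real.sqrt (2 * ε m + 1 / (m : ℝ)) := Real.sqrt_le_sqrt h3
    · have h1 : Filter.Tendsto (fun m : ℕ => 2 * ε m + 1 / (m : ℝ))
          Filter.atTop (nhds 0) := by
        have := (hε0.const_mul 2).add tendsto_one_div_atTop_nhds_zero_nat
        simpa using this
      have := (Real.continuous_sqrt.tendsto' 0 0 (by simp)).comp h1
      exact this
end
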